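/- Let G be a finite soluble group admitting a coprime automorphism α with G = [G,α]. Then for every prime p, p divides |G| if and only if there exists an α-invariant Sylow p-subgroup P of G with I_P(α) ≠ {1}, i.e. with P not contained in C_G(α). -/

import Mathlib

open Subgroup Finset
open scoped IsMulCommutative

private lemma card_range_mul_card_ker {W W' : Type*} [Group W] [Group W'] (f : W →* W') :
    Nat.card f.range * Nat.card f.ker = Nat.card W := by
  rw [Subgroup.card_eq_card_quotient_mul_card_subgroup f.ker]
  congr 1
  exact (Nat.card_congr (QuotientGroup.quotientKerEquivRange f).toEquiv).symm

private lemma norm_surj {W : Type*} [CommGroup W] [Finite W] (φ : MulAut W) {n : ℕ}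
    (hφn : φ ^ n = 1) (hco : (Nat.card W).Coprime n) (a : W)
    (ha : ∏ i ∈ Finset.range n, (φ ^ i) a = 1) : ∃ w : W, w⁻¹ * φ w = a := by
  set f : W →* W := MonoidHom.mk' (fun w => w⁻¹ * φ w)
    (by intro x y; show (x*y)⁻¹ * φ (x*y) = (x⁻¹ * φ x) * (y⁻¹ * φ y)
        rw [mul_inv, map_mul, mul_mul_mul_comm]) with hf
  set N : W →* W := MonoidHom.mk' (fun w => ∏ i ∈ Finset.range n, (φ ^ i) w)
    (by intro x y
        rw [← Finset.prod_mul_distrib]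
        exact Finset.prod_congr rfl fun i _ => map_mul _ _ _) with hN
  have hNapp : ∀ w, N w = ∏ i ∈ Finset.range n, (φ ^ i) w := fun _ => rfl
  have hfapp : ∀ w, f w = w⁻¹ * φ w := fun _ => rfl
  have hrange_le : f.range ≤ N.ker := by
    rintro _ ⟨w, rfl⟩
    have key : ∀ i, (φ ^ i) (f w) = ((φ ^ i) w)⁻¹ * (φ ^ (i + 1)) w := by
      intro i
      rw [hfapp, map_mul, map_inv, pow_succ, MulAut.mul_apply]
    rw [MonoidHom.mem_ker, hNapp, Finset.prod_congr rfl fun i _ => key i,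
      Finset.prod_mul_distrib, Finset.prod_inv_distrib]
    have h1 := Finset.prod_range_succ (fun i => (φ ^ i) w) n
    have h2 := Finset.prod_range_succ' (fun i => (φ ^ i) w) n
    have key2 : (∏ i ∈ Finset.range n, (φ ^ (i + 1)) w) * (φ ^ 0) w
        = (∏ i ∈ Finset.range n, (φ ^ i) w) * (φ ^ n) w := h2.symm.trans h1
    have h3 : (φ ^ n) w = w := by rw [hφn]; rfl
    have h4 : (φ ^ 0) w = w := by rw [pow_zero]; rfl
    rw [h3] at key2
    have : (∏ i ∈ Finset.range n, (φ ^ (i + 1)) w)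
        = (∏ i ∈ Finset.range n, (φ ^ i) w) * w * w⁻¹ := by
      rw [← key2, h4]; group
    rw [this]; group
  have hker_le : Nat.card f.ker ≤ Nat.card N.range := by
    have hfix : ∀ w : W, w ∈ f.ker → N w = w ^ n := by
      intro w hw
      have hφw : φ w = w := by
        have : w⁻¹ * φ w = 1 := hw
        rwa [inv_mul_eq_one, eq_comm] at this
      have : ∀ i, (φ ^ i) w = w := by
        intro i
        induction i with
        | zero => rfl
        | succ i ih => rw [pow_succ, MulAut.mul_apply, hφw, ih]
      rw [hNapp, Finset.prod_congr rfl fun i _ => this i, Finset.prod_const,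
        Finset.card_range]
    have : Function.Injective (fun w : f.ker => (⟨N w, ⟨w, rfl⟩⟩ : N.range)) := by
      intro w1 w2 h
      have h' : N (w1 : W) = N (w2 : W) := congrArg Subtype.val h
      rw [hfix _ w1.2, hfix _ w2.2] at h'
      exact Subtype.ext ((powCoprime hco).injective h')
    exact Nat.card_le_card_of_injective _ this
  have hcards : f.range = N.ker := by
    refine Subgroup.eq_of_le_of_card_ge hrange_le ?_
    have cf := card_range_mul_card_ker f
    have cN := card_range_mul_card_ker N
    have hpos : 0 < Nat.card N.range := Nat.card_pos
    have : Nat.card N.range * Nat.card N.ker ≤ Nat.card N.range * Nat.card f.range := by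
      rw [cN, ← cf, mul_comm]
      exact Nat.mul_le_mul_right _ hker_le
    exact Nat.le_of_mul_le_mul_left this hpos
  have haker : a ∈ N.ker := by rw [MonoidHom.mem_ker, hNapp]; exact ha
  rw [← hcards] at haker
  exact haker

private lemma telescope {Q : Type*} [Group Q] {V : Subgroup Q} [hVc : IsMulCommutative V]
    (u : ℕ → Q) (f : ℕ → V) (hf : ∀ i, (f i : Q) = u (i + 1) * (u i)⁻¹) (m : ℕ) :
    ((∏ i ∈ Finset.range m, f i : V) : Q) = u m * (u 0)⁻¹ := by
  induction m with
  | zero => simp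
  | succ m ih =>
    rw [Finset.prod_range_succ, mul_comm]
    push_cast
    rw [hf m]
    rw [ih]
    group

set_option maxHeartbeats 1600000 in
private lemma invariant_complement {Q : Type*} [Group Q] [Finite Q] (V : Subgroup Q)
    [V.Normal] [hVc : IsMulCommutative V] (hco : (Nat.card V).Coprime V.index)
    (β : MulAut Q) (hβV : Subgroup.map (β : Q →* Q) V = V)
    {n : ℕ} (hβn : β ^ n = 1) (hcon : (Nat.card V).Coprime n) :
    ∃ H : Subgroup Q, V.IsComplement' H ∧ Subgroup.map (β : Q →* Q) H = H := by
  classical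
  set π : Q →* Q ⧸ V := QuotientGroup.mk' V with hπdef
  set βX : (Q ⧸ V) ≃* (Q ⧸ V) := QuotientGroup.congr V V β hβV with hβXdef
  have hπβ : ∀ g : Q, βX (π g) = π (β g) := fun g => rfl
  have hβpow : ∀ (i : ℕ) (g : Q), (βX ^ i) (π g) = π ((β ^ i) g) := by
    intro i
    induction i with
    | zero => intro g; rfl
    | succ i ih =>
      intro g
      rw [pow_succ, pow_succ, MulAut.mul_apply, MulAut.mul_apply, hπβ, ih]
  have hβXn : βX ^ n = 1 := by
    ext x
    obtain ⟨g, rfl⟩ := QuotientGroup.mk'_surjective V x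
    rw [show ((1 : Q ⧸ V ≃* Q ⧸ V) : Q ⧸ V ≃* Q ⧸ V) ((QuotientGroup.mk' V) g) = π g from rfl,
      hβpow n g, hβn]
    rfl
  -- initial complement and section
  obtain ⟨H₀, hH₀⟩ := Subgroup.exists_right_complement'_of_coprime hco
  have hbij : Function.Bijective (π.comp H₀.subtype) := by
    constructor
    · intro x y hxy
      have h1 : ((x : Q)⁻¹ * y : Q) ∈ V := by
        rw [← QuotientGroup.eq_one_iff (G := Q) (N := V)]
        show π _ = 1
        rw [map_mul, map_inv]
        simp only [MonoidHom.comp_apply] at hxy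
        rw [show π (x : Q) = π (y : Q) from hxy]
        group
      have h2 : ((x : Q)⁻¹ * y : Q) ∈ H₀ := mul_mem (inv_mem x.2) y.2
      have h3 : ((x : Q)⁻¹ * y : Q) = 1 :=
        Subgroup.disjoint_def.mp hH₀.disjoint h1 h2
      have := inv_mul_eq_one.mp h3
      exact Subtype.ext this
    · intro x
      obtain ⟨g, rfl⟩ := QuotientGroup.mk'_surjective V x
      obtain ⟨⟨⟨v, hv⟩, ⟨h, hh⟩⟩, hvh, -⟩ := hH₀.existsUnique g
      refine ⟨⟨h, hh⟩, ?_⟩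
      show π h = π g
      rw [← hvh]
      simp only [map_mul]
      rw [show π v = 1 from (QuotientGroup.eq_one_iff _).mpr hv, one_mul]
  set e : H₀ ≃* Q ⧸ V := MulEquiv.ofBijective _ hbij with hedef
  set s : (Q ⧸ V) →* Q := H₀.subtype.comp e.symm.toMonoidHom with hsdef
  have hs : ∀ x, π (s x) = x := by
    intro x
    show (π.comp H₀.subtype) (e.symm x) = x
    rw [show (π.comp H₀.subtype) (e.symm x) = e (e.symm x) from rfl, e.apply_symm_apply]
  -- conjugation action of the quotient on V
  have hconj_one : ∀ v ∈ V, MulAut.conjNormal (H := V) v = 1 := by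
    intro v hv
    ext w
    have := hVc.is_comm.comm (⟨v, hv⟩ : V) w
    have hcoe : v * (w : Q) = (w : Q) * v := congrArg Subtype.val this
    show v * (w : Q) * v⁻¹ = (w : Q)
    rw [hcoe]; group
  set ρ : (Q ⧸ V) →* MulAut V := QuotientGroup.lift V MulAut.conjNormal hconj_one with hρdef
  have hρ : ∀ (g : Q) (v : V), ((ρ (π g)) v : Q) = g * v * g⁻¹ := fun g v => rfl
  -- the cocycle group Z1
  set Z1 : Subgroup ((Q ⧸ V) → V) :=
    { carrier := {c | ∀ x y, c (x * y) = c x * ρ x (c y)}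
      one_mem' := by intro x y; simp
      mul_mem' := by
        intro c d hc hd x y
        simp only [Pi.mul_apply, hc x y, hd x y, map_mul]
        exact mul_mul_mul_comm _ _ _ _
      inv_mem' := by
        intro c hc x y
        simp only [Pi.inv_apply, hc x y, map_inv, mul_inv] } with hZ1def
  have hZ1mem : ∀ c : ((Q ⧸ V) → V), c ∈ Z1 ↔ ∀ x y, c (x * y) = c x * ρ x (c y) :=
    fun c => Iff.rfl
  -- restriction of β to V
  set βV : V ≃* V := (β.subgroupMap V).trans (MulEquiv.subgroupCongr hβV) with hβVdef
  have hβVcoe : ∀ v : V, (βV v : Q) = β (v : Q) := fun v => rfl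
  have hβVsymm : ∀ v : V, (βV.symm v : Q) = β.symm (v : Q) := by
    intro v
    have h1 : β ((βV.symm v : Q)) = (v : Q) := by
      rw [← hβVcoe, βV.apply_symm_apply]
    calc (βV.symm v : Q) = β.symm (β ((βV.symm v : Q))) := (β.symm_apply_apply _).symm
      _ = β.symm (v : Q) := by rw [h1]
  -- compatibility of ρ with β
  have hcompat : ∀ (y : Q ⧸ V) (v : V), βV (ρ y v) = ρ (βX y) (βV v) := by
    intro y v
    obtain ⟨g, rfl⟩ := QuotientGroup.mk'_surjective V y
    apply Subtype.ext
    have h1 : ((ρ ((QuotientGroup.mk' V) g)) v : Q) = g * v * g⁻¹ := hρ g v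
    have h2 : ((ρ (βX ((QuotientGroup.mk' V) g))) (βV v) : Q)
        = β g * ((βV v : Q)) * (β g)⁻¹ := hρ (β g) (βV v)
    rw [hβVcoe, h1, h2, hβVcoe]
    simp [map_mul]
  -- the twist automorphism of Z1
  have hΦmem : ∀ c ∈ Z1, (fun x => βV (c (βX⁻¹ x))) ∈ Z1 := by
    intro c hc x y
    simp only []
    rw [show βX⁻¹ (x * y) = βX⁻¹ x * βX⁻¹ y from map_mul βX.symm x y,
      hc (βX⁻¹ x) (βX⁻¹ y), map_mul, hcompat]
    rw [show βX (βX⁻¹ x) = x from βX.apply_symm_apply x]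
  have hΦmem' : ∀ c ∈ Z1, (fun x => βV.symm (c (βX x))) ∈ Z1 := by
    intro c hc x y
    simp only []
    rw [show βX (x * y) = βX x * βX y from map_mul βX x y, hc (βX x) (βX y), map_mul]
    congr 1
    have := hcompat x (βV.symm (c (βX y)))
    rw [βV.apply_symm_apply] at this
    rw [← this, MulEquiv.symm_apply_apply]
  set φ : MulAut Z1 :=
    { toFun := fun c => ⟨fun x => βV ((c : (Q ⧸ V) → V) (βX⁻¹ x)), hΦmem _ c.2⟩
      invFun := fun c => ⟨fun x => βV.symm ((c : (Q ⧸ V) → V) (βX x)), hΦmem' _ c.2⟩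
      left_inv := by
        intro c
        apply Subtype.ext
        funext x
        show βV.symm (βV ((c : (Q ⧸ V) → V) (βX⁻¹ (βX x)))) = _
        rw [MulEquiv.symm_apply_apply,
          show (βX⁻¹ (βX x)) = x from βX.symm_apply_apply x]
      right_inv := by
        intro c
        apply Subtype.ext
        funext x
        show βV ((βV.symm ((c : (Q ⧸ V) → V) (βX (βX⁻¹ x))))) = _
        rw [MulEquiv.apply_symm_apply,
          show (βX (βX⁻¹ x)) = x from βX.apply_symm_apply x]
      map_mul' := by
        intro c d
        apply Subtype.ext
        funext x
        show βV (((c * d : Z1) : (Q ⧸ V) → V) (βX⁻¹ x)) = _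
        simp [map_mul] } with hφdef
  have hφapp : ∀ (c : Z1) (x : Q ⧸ V), ((φ c : Z1) : (Q ⧸ V) → V) x
      = βV ((c : (Q ⧸ V) → V) (βX⁻¹ x)) := fun c x => rfl
  have hφpow : ∀ (i : ℕ) (c : Z1) (x : Q ⧸ V),
      ((((φ ^ i) c : Z1) : (Q ⧸ V) → V) x : Q)
      = (β ^ i) (((c : (Q ⧸ V) → V) (((βX ^ i))⁻¹ x) : Q)) := by
    intro i
    induction i with
    | zero => intro c x; simp
    | succ i ih =>
      intro c x
      rw [pow_succ' φ i, MulAut.mul_apply, hφapp, hβVcoe, ih, pow_succ' β i,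
        MulAut.mul_apply]
      rw [show ((βX ^ (i+1))⁻¹ : Q ⧸ V ≃* Q ⧸ V) x = (βX ^ i)⁻¹ (βX⁻¹ x) by
        rw [pow_succ' βX i, mul_inv_rev, MulAut.mul_apply]]
  -- the difference cocycle a
  have haV : ∀ x : Q ⧸ V, β (s (βX⁻¹ x)) * (s x)⁻¹ ∈ V := by
    intro x
    rw [← QuotientGroup.eq_one_iff (G := Q) (N := V)]
    show π _ = 1
    rw [map_mul, map_inv, ← hπβ, hs, hs, show (βX (βX⁻¹ x)) = x from βX.apply_symm_apply x]
    group
  set a0 : (Q ⧸ V) → V := fun x => ⟨β (s (βX⁻¹ x)) * (s x)⁻¹, haV x⟩ with ha0def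
  have ha0coe : ∀ x, ((a0 x : Q)) = β (s (βX⁻¹ x)) * (s x)⁻¹ := fun x => rfl
  have ha0 : a0 ∈ Z1 := by
    intro x y
    apply Subtype.ext
    have hρs : ((ρ x) (a0 y) : Q) = s x * (a0 y : Q) * (s x)⁻¹ := by
      conv_lhs => rw [← hs x]
      exact hρ (s x) (a0 y)
    show (a0 (x * y) : Q) = (a0 x : Q) * ((ρ x) (a0 y) : Q)
    rw [hρs, ha0coe, ha0coe, ha0coe,
      show βX⁻¹ (x * y) = βX⁻¹ x * βX⁻¹ y from map_mul βX.symm x y,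
      map_mul s, map_mul β, map_mul s, mul_inv_rev]
    group
  set a : Z1 := ⟨a0, ha0⟩ with hadef
  -- φ has the right order-divisibility
  have hφn : φ ^ n = 1 := by
    ext c x
    have h1 := hφpow n c x
    rw [hβn, hβXn] at h1
    simpa using h1
  -- the norm of a is 1, by telescoping
  have hprod : (∏ i ∈ Finset.range n, (φ ^ i) a) = 1 := by
    apply Subtype.ext
    funext x
    apply Subtype.ext
    have hcoe1 : ((∏ i ∈ Finset.range n, (φ ^ i) a : Z1) : (Q ⧸ V) → V)
        = ∏ i ∈ Finset.range n, (((φ ^ i) a : Z1) : (Q ⧸ V) → V) :=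
      map_prod Z1.subtype _ _
    have hcoe2 : ((∏ i ∈ Finset.range n, (((φ ^ i) a : Z1) : (Q ⧸ V) → V)) x)
        = ∏ i ∈ Finset.range n, (((φ ^ i) a : Z1) : (Q ⧸ V) → V) x :=
      Finset.prod_apply x _ _
    rw [hcoe1, hcoe2]
    have hterm : ∀ i, ((((φ ^ i) a : Z1) : (Q ⧸ V) → V) x : Q)
        = (fun j => (β ^ j) (s ((βX ^ j)⁻¹ x))) (i + 1)
          * ((fun j => (β ^ j) (s ((βX ^ j)⁻¹ x))) i)⁻¹ := by
      intro i
      simp only []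
      have e1 : βX⁻¹ ((βX ^ i)⁻¹ x) = (βX ^ (i + 1))⁻¹ x := by
        rw [pow_succ βX i, mul_inv_rev, MulAut.mul_apply]
      have e2 : ∀ y : Q, (β ^ i) (β y) = (β ^ (i + 1)) y := by
        intro y
        rw [pow_succ β i, MulAut.mul_apply]
      rw [hφpow i a x, ha0coe, map_mul, map_inv, e2, e1]
    have htel := telescope (V := V) (fun j => (β ^ j) (s ((βX ^ j)⁻¹ x)))
      (fun i => (((φ ^ i) a : Z1) : (Q ⧸ V) → V) x) hterm n
    have hun : (β ^ n) (s ((βX ^ n)⁻¹ x)) = s x := by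
      rw [hβn, hβXn, inv_one]
      rfl
    have hu0 : (β ^ 0) (s ((βX ^ 0)⁻¹ x)) = s x := by
      rw [pow_zero, pow_zero, inv_one]
      rfl
    show ((∏ i ∈ Finset.range n, (((φ ^ i) a : Z1) : (Q ⧸ V) → V) x : V) : Q) = ((1 : V) : Q)
    rw [htel]
    rw [hun, hu0]
    simp
  -- coprimality of |Z1| and n
  have hZco : (Nat.card Z1).Coprime n := by
    have h1 : Nat.card Z1 ∣ Nat.card ((Q ⧸ V) → V) := Subgroup.card_subgroup_dvd_card Z1
    haveI : Fintype (Q ⧸ V) := Fintype.ofFinite _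
    have h2 : Nat.card ((Q ⧸ V) → V) = Nat.card V ^ Fintype.card (Q ⧸ V) := by
      rw [Nat.card_pi, Finset.prod_const, Finset.card_univ]
    exact Nat.Coprime.coprime_dvd_left h1 (by rw [h2]; exact hcon.pow_left _)
  -- solve the twisted equation
  obtain ⟨w, hw⟩ := norm_surj φ hφn hZco a⁻¹ (by
    have : ∏ i ∈ Finset.range n, (φ ^ i) a⁻¹ = (∏ i ∈ Finset.range n, (φ ^ i) a)⁻¹ := by
      rw [← Finset.prod_inv_distrib]
      exact Finset.prod_congr rfl fun i _ => map_inv _ _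
    rw [this, hprod, inv_one])
  have hwa : φ w * a = w := by
    have h1 : a = (φ w)⁻¹ * w := by
      rw [← inv_inv a, ← hw]
      group
    rw [h1, ← mul_assoc, mul_inv_cancel, one_mul]
  have hwax : ∀ x, (((φ w : Z1) : (Q ⧸ V) → V) x : Q) * (a0 x : Q) = ((w : (Q ⧸ V) → V) x : Q) := by
    intro x
    have h : (((φ w * a : Z1) : (Q ⧸ V) → V) x) = ((w : (Q ⧸ V) → V) x) := by rw [hwa]
    have h2 : (((φ w : Z1) : (Q ⧸ V) → V) x) * ((a : (Q ⧸ V) → V) x)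
        = ((w : (Q ⧸ V) → V) x) := h
    exact congrArg Subtype.val h2
  -- the invariant section t
  have hρs : ∀ (x : Q ⧸ V) (v : V), ((ρ x) v : Q) = s x * v * (s x)⁻¹ := by
    intro x v
    conv_lhs => rw [← hs x]
    exact hρ (s x) v
  set t0 : (Q ⧸ V) → Q := fun x => ((w : (Q ⧸ V) → V) x : Q) * s x with ht0def
  have ht_hom : ∀ x y, t0 (x * y) = t0 x * t0 y := by
    intro x y
    have hc := w.2 x y
    have hccoe : ((w : (Q ⧸ V) → V) (x * y) : Q)
        = ((w : (Q ⧸ V) → V) x : Q) * (s x * ((w : (Q ⧸ V) → V) y : Q) * (s x)⁻¹) := by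
      rw [hc]
      push_cast
      rw [hρs]
    rw [ht0def]
    simp only []
    rw [hccoe, map_mul s]
    group
  set t : (Q ⧸ V) →* Q := MonoidHom.mk' t0 ht_hom with htdef
  have hts : ∀ x, π (t x) = x := by
    intro x
    show π (((w : (Q ⧸ V) → V) x : Q) * s x) = x
    have hπ1 : π (((w : (Q ⧸ V) → V) x : Q)) = 1 :=
      (QuotientGroup.eq_one_iff _).mpr ((w : (Q ⧸ V) → V) x).2
    rw [map_mul, hπ1, one_mul, hs]
  have htβ : ∀ x, β (t x) = t (βX x) := by
    intro x
    have h1 := hwax (βX x)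
    have h2 : (((φ w : Z1) : (Q ⧸ V) → V) (βX x) : Q)
        = β (((w : (Q ⧸ V) → V) x : Q)) := by
      rw [hφapp, hβVcoe,
        show βX⁻¹ (βX x) = x from βX.symm_apply_apply x]
    have h3 : (a0 (βX x) : Q) = β (s x) * (s (βX x))⁻¹ := by
      rw [ha0coe,
        show βX⁻¹ (βX x) = x from βX.symm_apply_apply x]
    rw [h2, h3] at h1
    show β (((w : (Q ⧸ V) → V) x : Q) * s x) = ((w : (Q ⧸ V) → V) (βX x) : Q) * s (βX x)
    rw [map_mul, ← h1]
    group
  refine ⟨t.range, ?_, ?_⟩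
  · rw [Subgroup.isComplement'_def]
    rw [Subgroup.isComplement_iff_existsUnique]
    intro g
    refine ⟨⟨⟨g * (t (π g))⁻¹, ?_⟩, ⟨t (π g), ⟨π g, rfl⟩⟩⟩, ?_, ?_⟩
    · have hπg : π (g * (t (π g))⁻¹) = 1 := by
        rw [map_mul, map_inv, hts]
        group
      exact (QuotientGroup.eq_one_iff _).mp hπg
    · show g * (t (π g))⁻¹ * t (π g) = g
      group
    · rintro ⟨⟨v, hv⟩, ⟨h, ⟨y, rfl⟩⟩⟩ hg
      simp only [Prod.mk.injEq, Subtype.mk.injEq]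
      have hg' : v * t y = g := hg
      have hy : y = π g := by
        have hπv : π v = 1 := (QuotientGroup.eq_one_iff _).mpr hv
        rw [← hg', map_mul, hπv, one_mul, hts]
      constructor
      · rw [← hy, ← hg']
        group
      · rw [hy]
  · apply le_antisymm
    · rintro z hz
      rw [Subgroup.mem_map] at hz
      obtain ⟨y, ⟨x, rfl⟩, rfl⟩ := hz
      exact ⟨βX x, (htβ x).symm⟩
    · rintro z ⟨x, rfl⟩
      rw [Subgroup.mem_map]
      exact ⟨t (βX⁻¹ x), ⟨βX⁻¹ x, rfl⟩, by
        rw [show ((β : Q →* Q) (t (βX⁻¹ x))) = β (t (βX⁻¹ x)) from rfl, htβ,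
          show (βX (βX⁻¹ x)) = x from βX.apply_symm_apply x]⟩

/-- The subgroup `[G,α]` generated by all `g⁻¹ · g^α`. -/
def autCommutator {G : Type*} [Group G] (α : MulAut G) : Subgroup G :=
  Subgroup.closure (Set.range fun g : G => g⁻¹ * α g)

private lemma autCommutator_mem {G : Type*} [Group G] (α : MulAut G) (g : G) :
    g⁻¹ * α g ∈ autCommutator α :=
  Subgroup.subset_closure ⟨g, rfl⟩

private lemma autCommutator_le {G : Type*} [Group G] {α : MulAut G} {H : Subgroup G}
    (h : ∀ g : G, g⁻¹ * α g ∈ H) : autCommutator α ≤ H := by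
  rw [autCommutator, Subgroup.closure_le]
  rintro _ ⟨g, rfl⟩
  exact h g

private lemma inv_mem_iff' {H : Type*} [Group H] {K : Subgroup H} {β : MulAut H}
    (h : Subgroup.map (β : H →* H) K = K) (y : H) : β y ∈ K ↔ y ∈ K := by
  constructor
  · intro hy
    have hy' : β y ∈ Subgroup.map (β : H →* H) K := h.symm ▸ hy
    obtain ⟨z, hz, hzz⟩ := hy'
    rwa [← β.injective hzz]
  · intro hy
    rw [← h]
    exact Subgroup.mem_map_of_mem _ hy

private lemma exists_minimal_invariant {G : Type*} [Group G] [Finite G] [Group.IsSolvable G]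
    (α : MulAut G) (hG : Nat.card G ≠ 1) :
    ∃ V : Subgroup G, V.Normal ∧ Subgroup.map (α : G →* G) V = V ∧ V ≠ ⊥ ∧
      IsMulCommutative V ∧ ∃ q : ℕ, q.Prime ∧ IsPGroup q V := by
  classical
  haveI : Finite (Subgroup G) :=
    Finite.of_injective (fun H : Subgroup G => (H : Set G)) SetLike.coe_injective
  set S : Set (Subgroup G) := {W | W.Normal ∧ Subgroup.map (α : G →* G) W = W ∧ W ≠ ⊥} with hSdef
  have htopS : (⊤ : Subgroup G) ∈ S := by
    refine ⟨inferInstance, Subgroup.map_top_of_surjective _ α.surjective, ?_⟩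
    intro h
    apply hG
    rw [← Subgroup.card_top (G := G), h, Subgroup.card_bot]
  obtain ⟨V, hVS, hmin⟩ := Set.exists_min_image S (fun W => Nat.card W) (Set.toFinite S)
    ⟨⊤, htopS⟩
  obtain ⟨hVnorm, hVmap, hVbot⟩ := hVS
  haveI := hVnorm
  have hminW : ∀ W : Subgroup G, W.Normal → Subgroup.map (α : G →* G) W = W → W ≠ ⊥ →
      W ≤ V → W = V := by
    intro W h1 h2 h3 h4
    exact Subgroup.eq_of_le_of_card_ge h4 (hmin W ⟨h1, h2, h3⟩)
  -- V is abelian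
  have hDbot : ⁅V, V⁆ = ⊥ := by
    by_contra hD
    have hDV : ⁅V, V⁆ = V := by
      refine hminW _ inferInstance ?_ hD (Subgroup.commutator_le_left V V)
      rw [Subgroup.map_commutator, hVmap]
    have hser : ∀ m, V ≤ derivedSeries G m := by
      intro m
      induction m with
      | zero => exact le_top
      | succ m ih =>
        rw [derivedSeries_succ]
        calc V = ⁅V, V⁆ := hDV.symm
          _ ≤ ⁅derivedSeries G m, derivedSeries G m⁆ := Subgroup.commutator_mono ih ih
    obtain ⟨m, hm⟩ := (inferInstance : Group.IsSolvable G).solvable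
    exact hVbot (le_bot_iff.mp (hm ▸ hser m))
  have hVcent : V ≤ Subgroup.centralizer (V : Set G) :=
    Subgroup.commutator_eq_bot_iff_le_centralizer.mp hDbot
  have hVcomm : IsMulCommutative V := by
    constructor
    constructor
    intro a b
    apply Subtype.ext
    exact (Subgroup.mem_centralizer_iff.mp (hVcent a.2) (b : G) b.2).symm
  -- V is a q-group
  have hVcard : Nat.card V ≠ 1 := fun h => hVbot (Subgroup.card_eq_one.mp h)
  obtain ⟨q, hq, hqdvd⟩ := Nat.exists_prime_and_dvd hVcard
  haveI : Fact q.Prime := ⟨hq⟩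
  set W : Subgroup G :=
    { carrier := {g | g ∈ V ∧ g ^ q = 1}
      one_mem' := ⟨one_mem V, one_pow q⟩
      mul_mem' := by
        rintro a b ⟨haV, haq⟩ ⟨hbV, hbq⟩
        refine ⟨mul_mem haV hbV, ?_⟩
        have hab : Commute a b :=
          (Subgroup.mem_centralizer_iff.mp (hVcent haV) b hbV).symm
        rw [hab.mul_pow, haq, hbq, one_mul]
      inv_mem' := by
        rintro a ⟨haV, haq⟩
        exact ⟨inv_mem haV, by rw [inv_pow, haq, inv_one]⟩ } with hWdef
  have hWmem : ∀ g : G, g ∈ W ↔ g ∈ V ∧ g ^ q = 1 := fun g => Iff.rfl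
  have hWnorm : W.Normal := by
    constructor
    rintro g ⟨hgV, hgq⟩ x
    refine ⟨hVnorm.conj_mem g hgV x, ?_⟩
    have := map_pow (MulAut.conj x).toMonoidHom g q
    simp only [MulAut.conj_apply, MulEquiv.coe_toMonoidHom] at this
    rw [← this, hgq]
    simp
  have hVα : ∀ g, g ∈ V → α g ∈ V := by
    intro g hg
    rw [← hVmap]
    exact Subgroup.mem_map_of_mem _ hg
  have hVαsymm : ∀ g, g ∈ V → α.symm g ∈ V := by
    intro g hg
    have : g ∈ Subgroup.map (α : G →* G) V := hVmap.symm ▸ hg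
    obtain ⟨u, hu, huu⟩ := this
    have h2 : α.symm g = u := by
      apply α.injective
      rw [α.apply_symm_apply]
      exact huu.symm
    rwa [h2]
  have hWmap : Subgroup.map (α : G →* G) W = W := by
    apply le_antisymm
    · rintro _ ⟨g, ⟨hgV, hgq⟩, rfl⟩
      exact ⟨hVα g hgV, by rw [← map_pow, hgq, map_one]⟩
    · rintro g ⟨hgV, hgq⟩
      refine ⟨α.symm g, ⟨hVαsymm g hgV, ?_⟩, α.apply_symm_apply g⟩
      have : α.symm (g ^ q) = α.symm 1 := by rw [hgq]
      rwa [map_pow, map_one] at this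
  have hWbot : W ≠ ⊥ := by
    haveI : Fintype V := Fintype.ofFinite V
    obtain ⟨v, hv⟩ := exists_prime_orderOf_dvd_card (G := V) q
      (by rw [← Nat.card_eq_fintype_card]; exact hqdvd)
    intro hWb
    have hvW : (v : G) ∈ W := by
      refine ⟨v.2, ?_⟩
      have : (v ^ q : V) = 1 := by rw [← hv, pow_orderOf_eq_one]
      calc (v : G) ^ q = ((v ^ q : V) : G) := by push_cast; ring_nf
        _ = 1 := by rw [this]; rfl
    rw [hWb, Subgroup.mem_bot] at hvW
    have : v = 1 := Subtype.ext hvW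
    rw [this, orderOf_one] at hv
    exact hq.ne_one hv.symm
  have hWV := hminW W hWnorm hWmap hWbot (fun g hg => hg.1)
  refine ⟨V, hVnorm, hVmap, hVbot, hVcomm, q, hq, ?_⟩
  intro v
  refine ⟨1, ?_⟩
  have hvW : (v : G) ∈ W := hWV.symm ▸ v.2
  apply Subtype.ext
  rw [pow_one]
  push_cast
  exact hvW.2

private lemma congr_pow_apply {G : Type*} [Group G] (V : Subgroup G) [V.Normal] (α : MulAut G)
    (h : Subgroup.map (α : G →* G) V = V) :
    ∀ (i : ℕ) (g : G), ((QuotientGroup.congr V V α h) ^ i) ((QuotientGroup.mk' V) g)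
      = (QuotientGroup.mk' V) ((α ^ i) g) := by
  intro i
  induction i with
  | zero => intro g; rfl
  | succ i ihi =>
    intro g
    rw [pow_succ, pow_succ, MulAut.mul_apply, MulAut.mul_apply,
      show (QuotientGroup.congr V V α h) ((QuotientGroup.mk' V) g)
        = (QuotientGroup.mk' V) (α g) from rfl, ihi (α g)]

universe u

private lemma main_ind : ∀ (k : ℕ) (G : Type u) [Group G] [Finite G] [Group.IsSolvable G]
    (α : MulAut G), Nat.card G ≤ k → (orderOf α).Coprime (Nat.card G) →
    autCommutator α = ⊤ → ∀ p : ℕ, p.Prime → p ∣ Nat.card G →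
    ∃ P : Sylow p G, (P : Subgroup G).map α.toMonoidHom = P ∧
      ∃ x ∈ (P : Subgroup G), α x ≠ x := by
  intro k
  induction k with
  | zero =>
    intro G _ _ _ α hk _ _ p _ _
    have := Nat.card_pos (α := G)
    omega
  | succ k ih =>
    intro G _i1 _i2 _i3 α hk hcop hGA p hp hpdvd
    haveI : Fact p.Prime := ⟨hp⟩
    set n := orderOf α with hndef
    have hαn : α ^ n = 1 := pow_orderOf_eq_one α
    have hG1 : Nat.card G ≠ 1 := by
      intro h
      rw [h, Nat.dvd_one] at hpdvd
      exact hp.ne_one hpdvd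
    obtain ⟨V, hVnorm, hVmap, hVbot, hVcomm, q, hq, hVq⟩ := exists_minimal_invariant α hG1
    haveI := hVnorm
    haveI := hVcomm
    haveI : Fact q.Prime := ⟨hq⟩
    set π : G →* G ⧸ V := QuotientGroup.mk' V with hπdef
    set αX : (G ⧸ V) ≃* (G ⧸ V) := QuotientGroup.congr V V α hVmap with hαXdef
    have hπα : ∀ g, αX (π g) = π (α g) := fun _ => rfl
    have hcards : Nat.card (G ⧸ V) * Nat.card V = Nat.card G :=
      (Subgroup.card_eq_card_quotient_mul_card_subgroup V).symm
    have hcardV1 : Nat.card V ≠ 1 := fun h => hVbot (Subgroup.card_eq_one.mp h)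
    have hVα : ∀ g, g ∈ V → α g ∈ V := by
      intro g hg
      rw [← hVmap]
      exact Subgroup.mem_map_of_mem _ hg
  
    by_cases hpX : p ∣ Nat.card (G ⧸ V)
    · -- p divides the order of the quotient: use the inductive hypothesis
      have hcardlt : Nat.card (G ⧸ V) < Nat.card G := by
        have h1 : 0 < Nat.card (G ⧸ V) := Nat.card_pos
        have h2 : 2 ≤ Nat.card V := by
          have := Nat.card_pos (α := V)
          omega
        calc Nat.card (G ⧸ V) < Nat.card (G ⧸ V) * Nat.card V := by nlinarith
          _ = Nat.card G := hcards
      have hαXn : αX ^ n = 1 := by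
        ext x
        obtain ⟨g, rfl⟩ := QuotientGroup.mk'_surjective V x
        rw [show ((1 : (G ⧸ V) ≃* (G ⧸ V))) ((QuotientGroup.mk' V) g)
          = (QuotientGroup.mk' V) g from rfl, congr_pow_apply V α hVmap n g, hαn]
        rfl
      have hcopX : (orderOf αX).Coprime (Nat.card (G ⧸ V)) := by
        have h1 : orderOf αX ∣ n := orderOf_dvd_of_pow_eq_one hαXn
        have h2 : Nat.card (G ⧸ V) ∣ Nat.card G := ⟨Nat.card V, hcards.symm⟩
        exact Nat.Coprime.coprime_dvd_left h1 (Nat.Coprime.coprime_dvd_right h2 hcop)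
      have hGAX : autCommutator αX = ⊤ := by
        apply top_le_iff.mp
        rw [← Subgroup.map_top_of_surjective π (QuotientGroup.mk'_surjective V), ← hGA]
        rw [autCommutator, MonoidHom.map_closure]
        apply Subgroup.closure_mono
        rintro _ ⟨_, ⟨g, rfl⟩, rfl⟩
        refine ⟨π g, ?_⟩
        show (π g)⁻¹ * αX (π g) = π (g⁻¹ * α g)
        rw [hπα, map_mul, map_inv]
      obtain ⟨Pb, hPbmap, xb, hxbP, hxb⟩ := ih (G ⧸ V) αX
        (by omega) hcopX hGAX p hp hpX
      have hPbmap' : Subgroup.map (αX : (G ⧸ V) →* (G ⧸ V)) (Pb : Subgroup (G ⧸ V)) = Pb := by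
        rw [← MulEquiv.toMonoidHom_eq_coe]
        exact hPbmap
      set Q : Subgroup G := Subgroup.comap π (Pb : Subgroup (G ⧸ V)) with hQdef
      have hVQ : V ≤ Q := by
        intro v hv
        show π v ∈ (Pb : Subgroup (G ⧸ V))
        rw [show π v = 1 from (QuotientGroup.eq_one_iff v).mpr hv]
        exact one_mem _
      have hQmap : Subgroup.map (α : G →* G) Q = Q := by
        apply le_antisymm
        · rintro _ ⟨g, hg, rfl⟩
          show π (α g) ∈ (Pb : Subgroup (G ⧸ V))
          rw [← hπα]
          exact (inv_mem_iff' hPbmap' (π g)).mpr hg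
        · intro x hx
          refine ⟨α.symm x, ?_, α.apply_symm_apply x⟩
          show π (α.symm x) ∈ (Pb : Subgroup (G ⧸ V))
          apply (inv_mem_iff' hPbmap' (π (α.symm x))).mp
          rw [hπα, α.apply_symm_apply]
          exact hx
      have hQidx : ¬ p ∣ Q.index := by
        rw [hQdef, Subgroup.index_comap_of_surjective _ (QuotientGroup.mk'_surjective V)]
        exact Pb.not_dvd_index
      have hVαsymm : ∀ g, g ∈ V → α.symm g ∈ V := by
        intro g hg
        have : g ∈ Subgroup.map (α : G →* G) V := hVmap.symm ▸ hg
        obtain ⟨u, hu, huu⟩ := this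
        have h2 : α.symm g = u := by
          apply α.injective
          rw [α.apply_symm_apply]
          exact huu.symm
        rwa [h2]
      by_cases hqp : q = p
      · -- V is a p-group: the preimage Q is an invariant Sylow p-subgroup
        subst hqp
        have hQp : IsPGroup q ↥Q :=
          Pb.isPGroup'.comap_of_ker_isPGroup π
            (by rw [QuotientGroup.ker_mk']; exact hVq)
        set P : Sylow q G := hQp.toSylow hQidx with hPdef
        refine ⟨P, ?_, ?_⟩
        · rw [MulEquiv.toMonoidHom_eq_coe]
          exact hQmap
        · obtain ⟨x, hx⟩ := QuotientGroup.mk'_surjective V xb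
          refine ⟨x, ?_, ?_⟩
          · show π x ∈ (Pb : Subgroup (G ⧸ V))
            rw [show π x = xb from hx]
            exact hxbP
          · intro hfix
            apply hxb
            calc αX xb = αX (π x) := by rw [show π x = xb from hx]
              _ = π (α x) := hπα x
              _ = π x := by rw [hfix]
              _ = xb := hx
      · -- q ≠ p : lift the Sylow subgroup of the quotient using an invariant complement
        set βQ : ↥Q ≃* ↥Q := (α.subgroupMap Q).trans (MulEquiv.subgroupCongr hQmap) with hβQdef
        have hβQcoe : ∀ x : ↥Q, ((βQ x : ↥Q) : G) = α (x : G) := fun _ => rfl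
        have hβQsymmcoe : ∀ x : ↥Q, ((βQ.symm x : ↥Q) : G) = α.symm (x : G) := by
          intro x
          have h1 : α ((βQ.symm x : ↥Q) : G) = (x : G) := by
            rw [← hβQcoe, βQ.apply_symm_apply]
          apply α.injective
          rw [α.apply_symm_apply]
          exact h1
        have hβQn : βQ ^ n = 1 := by
          have hpow : ∀ (i : ℕ) (x : ↥Q), (((βQ ^ i) x : ↥Q) : G) = (α ^ i) (x : G) := by
            intro i
            induction i with
            | zero => intro x; rfl
            | succ i ihi =>
              intro x
              rw [pow_succ, pow_succ, MulAut.mul_apply, MulAut.mul_apply, ihi (βQ x), hβQcoe]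
          ext x
          rw [hpow n x, hαn]
          rfl
        set V' : Subgroup ↥Q := V.subgroupOf Q with hV'def
        haveI : V'.Normal := Subgroup.Normal.subgroupOf hVnorm Q
        have hV'memiff : ∀ x : ↥Q, x ∈ V' ↔ (x : G) ∈ V := fun x => Subgroup.mem_subgroupOf
        haveI hV'comm : IsMulCommutative V' := by
          constructor
          constructor
          intro a b
          have hg : ((a : ↥Q) : G) * ((b : ↥Q) : G) = ((b : ↥Q) : G) * ((a : ↥Q) : G) :=
            congrArg Subtype.val (hVcomm.is_comm.comm
              ⟨((a : ↥Q) : G), (hV'memiff a.1).mp a.2⟩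
              ⟨((b : ↥Q) : G), (hV'memiff b.1).mp b.2⟩)
          exact Subtype.ext (Subtype.ext hg)
        have hV'card : Nat.card V' = Nat.card V :=
          Nat.card_congr (Subgroup.subgroupOfEquivOfLe hVQ).toEquiv
        set ψ : ↥Q →* ↥(Pb : Subgroup (G ⧸ V)) :=
          MonoidHom.codRestrict (π.comp Q.subtype) (Pb : Subgroup (G ⧸ V))
            (fun x => x.2) with hψdef
        have hψapp : ∀ x : ↥Q, (ψ x : G ⧸ V) = π (x : G) := fun _ => rfl
        have hψsurj : Function.Surjective ψ := by
          rintro ⟨y, hy⟩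
          obtain ⟨g, hg⟩ := QuotientGroup.mk'_surjective V y
          refine ⟨⟨g, ?_⟩, ?_⟩
          · show π g ∈ (Pb : Subgroup (G ⧸ V))
            rw [show π g = y from hg]
            exact hy
          · apply Subtype.ext
            rw [hψapp]
            exact hg
        have hψker : ψ.ker = V' := by
          ext x
          rw [MonoidHom.mem_ker, hV'memiff]
          constructor
          · intro h
            have h2 : π (x : G) = 1 := by
              rw [← hψapp]
              exact congrArg Subtype.val h
            exact (QuotientGroup.eq_one_iff _).mp h2
          · intro h
            apply Subtype.ext
            rw [hψapp]
            exact (QuotientGroup.eq_one_iff _).mpr h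
        have hV'index : V'.index = Nat.card ↥(Pb : Subgroup (G ⧸ V)) := by
          rw [Subgroup.index_eq_card]
          exact Nat.card_congr
            ((QuotientGroup.quotientMulEquivOfEq hψker.symm).trans
              (QuotientGroup.quotientKerEquivOfSurjective ψ hψsurj)).toEquiv
        obtain ⟨b, hb⟩ := (IsPGroup.iff_card (p := p)).mp Pb.isPGroup'
        obtain ⟨a0, ha0⟩ := (IsPGroup.iff_card (p := q)).mp hVq
        have hco' : (Nat.card V').Coprime V'.index := by
          rw [hV'card, hV'index, ha0, hb]
          exact Nat.Coprime.pow _ _ ((Nat.coprime_primes hq hp).mpr hqp)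
        have hβV' : Subgroup.map (βQ : ↥Q →* ↥Q) V' = V' := by
          apply le_antisymm
          · rintro _ ⟨y, hy, rfl⟩
            rw [SetLike.mem_coe, hV'memiff] at *
            rw [show (((βQ : ↥Q →* ↥Q) y : ↥Q) : G) = α (y : G) from hβQcoe y]
            exact hVα _ ((hV'memiff y).mp hy)
          · intro x hx
            refine ⟨βQ.symm x, ?_, βQ.apply_symm_apply x⟩
            apply (hV'memiff _).mpr
            rw [hβQsymmcoe]
            exact hVαsymm _ ((hV'memiff x).mp hx)
        have hconQ : (Nat.card V').Coprime n := by
          rw [hV'card]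
          have h1 : Nat.card V ∣ Nat.card G := Subgroup.card_subgroup_dvd_card V
          exact (Nat.Coprime.coprime_dvd_right h1 hcop).symm
        obtain ⟨H', hH'comp, hH'map⟩ := invariant_complement V' hco' βQ hβV' hβQn hconQ
        set P0 : Subgroup G := H'.map Q.subtype with hP0def
        have hQcard : Nat.card V' * Nat.card ↥(Pb : Subgroup (G ⧸ V)) = Nat.card ↥Q := by
          rw [← hV'index]
          exact Subgroup.card_mul_index V'
        have hH'card : Nat.card H' = Nat.card ↥(Pb : Subgroup (G ⧸ V)) := by
          have h1 := hH'comp.card_mul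
          have hpos : 0 < Nat.card V' := Nat.card_pos
          exact Nat.eq_of_mul_eq_mul_left hpos (h1.trans hQcard.symm)
        have hP0card : Nat.card P0 = Nat.card ↥(Pb : Subgroup (G ⧸ V)) := by
          rw [← hH'card]
          exact (Nat.card_congr (Subgroup.equivMapOfInjective H' Q.subtype
            (Subgroup.subtype_injective Q)).toEquiv).symm
        have hP0p : IsPGroup p ↥P0 := (IsPGroup.iff_card (p := p)).mpr ⟨b, by rw [hP0card, hb]⟩
        have hP0idx : ¬ p ∣ P0.index := by
          have hmul := Subgroup.card_mul_index P0
          have h4 := Subgroup.card_mul_index (Pb : Subgroup (G ⧸ V))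
          have h5 : Nat.card P0 * P0.index
              = Nat.card P0 * ((Pb : Subgroup (G ⧸ V)).index * Nat.card V) := by
            rw [hmul, ← hcards, ← h4, hP0card]
            ring
          have hpos : 0 < Nat.card P0 := Nat.card_pos
          have hidx : P0.index = (Pb : Subgroup (G ⧸ V)).index * Nat.card V :=
            Nat.eq_of_mul_eq_mul_left hpos h5
          rw [hidx]
          intro hdvd
          rcases hp.dvd_mul.mp hdvd with h | h
          · exact Pb.not_dvd_index h
          · rw [ha0] at h
            exact hqp ((Nat.prime_dvd_prime_iff_eq hp hq).mp (hp.dvd_of_dvd_pow h)).symm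
        set P : Sylow p G := hP0p.toSylow hP0idx with hPdef
        have hP0map : Subgroup.map (α : G →* G) P0 = P0 := by
          apply le_antisymm
          · rintro _ ⟨g, hg, rfl⟩
            obtain ⟨h', hh', rfl⟩ := hg
            show α ((h' : ↥Q) : G) ∈ P0
            rw [← hβQcoe]
            exact ⟨βQ h', (inv_mem_iff' hH'map h').mpr hh', rfl⟩
          · rintro _ ⟨h', hh', rfl⟩
            refine ⟨((βQ.symm h' : ↥Q) : G), ⟨βQ.symm h', ?_, rfl⟩, ?_⟩
            · apply (inv_mem_iff' hH'map (βQ.symm h')).mp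
              rw [βQ.apply_symm_apply]
              exact hh'
            · show α ((βQ.symm h' : ↥Q) : G) = ((h' : ↥Q) : G)
              rw [← hβQcoe, βQ.apply_symm_apply]
        have hmapP0 : Subgroup.map π P0 = (Pb : Subgroup (G ⧸ V)) := by
          apply Subgroup.eq_of_le_of_card_ge
          · rintro _ ⟨g, hg, rfl⟩
            obtain ⟨h', hh', rfl⟩ := hg
            exact h'.2
          · have hinj : Function.Injective ⇑(π.comp P0.subtype) := by
              rw [← MonoidHom.ker_eq_bot_iff]
              apply (Subgroup.eq_bot_iff_forall _).mpr
              intro x hx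
              have hxV : ((x : ↥P0) : G) ∈ V :=
                (QuotientGroup.eq_one_iff _).mp (MonoidHom.mem_ker.mp hx)
              obtain ⟨h', hh', hcoe⟩ := x.2
              have hh'V' : h' ∈ V' := (hV'memiff h').mpr
                (by rw [show ((h' : ↥Q) : G) = ((x : ↥P0) : G) from hcoe]; exact hxV)
              have h1 : h' = 1 := Subgroup.disjoint_def.mp hH'comp.disjoint hh'V' hh'
              apply Subtype.ext
              rw [← hcoe, h1]
              rfl
            have hcardmap : Nat.card ↥(Subgroup.map π P0) = Nat.card ↥P0 := by
              have h6 : (π.comp P0.subtype).range = Subgroup.map π P0 := by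
                rw [MonoidHom.range_comp, Subgroup.range_subtype]
              rw [← h6]
              exact (Nat.card_congr (MonoidHom.ofInjective hinj).toEquiv).symm
            rw [hcardmap, hP0card]
        refine ⟨P, ?_, ?_⟩
        · rw [MulEquiv.toMonoidHom_eq_coe]
          exact hP0map
        · have hxbmem : xb ∈ Subgroup.map π P0 := by rw [hmapP0]; exact hxbP
          obtain ⟨x, hxP0, hx⟩ := hxbmem
          refine ⟨x, hxP0, ?_⟩
          intro hfix
          apply hxb
          calc αX xb = αX (π x) := by rw [hx]
            _ = π (α x) := hπα x
            _ = π x := by rw [hfix]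
            _ = xb := hx
    · -- p does not divide the order of the quotient: V is a normal Sylow p-subgroup
      have hpV : p ∣ Nat.card V := by
        rcases hp.dvd_mul.mp (show p ∣ Nat.card (G ⧸ V) * Nat.card V from hcards ▸ hpdvd) with h | h
        · exact absurd h hpX
        · exact h
      obtain ⟨m, hm⟩ := (IsPGroup.iff_card (p := q) (G := V)).mp hVq
      have hqp : q = p := by
        have h1 : p ∣ q ^ m := hm ▸ hpV
        exact ((Nat.prime_dvd_prime_iff_eq hp hq).mp (hp.dvd_of_dvd_pow h1)).symm
      subst hqp
      have hVidx : ¬ q ∣ V.index := by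
        rw [Subgroup.index_eq_card]
        exact hpX
      set PV : Sylow q G := hVq.toSylow hVidx with hPVdef
      by_cases hex : ∃ x ∈ V, α x ≠ x
      · obtain ⟨x, hxV, hxne⟩ := hex
        refine ⟨PV, ?_, x, hxV, hxne⟩
        rw [MulEquiv.toMonoidHom_eq_coe]
        exact hVmap
      · exfalso
        push_neg at hex
        -- V is central
        have hcent : ∀ g : G, g ∈ Subgroup.centralizer (V : Set G) := by
          have hle : autCommutator α ≤ Subgroup.centralizer (V : Set G) := by
            apply autCommutator_le
            intro g
            rw [Subgroup.mem_centralizer_iff]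
            intro v hv
            have h2 : α v = v := hex v hv
            have heq : α g * v * (α g)⁻¹ = g * v * g⁻¹ := by
              have h3 : α (g * v * g⁻¹) = g * v * g⁻¹ := hex _ (hVnorm.conj_mem v hv g)
              rw [map_mul, map_mul, map_inv, h2] at h3
              exact h3
            apply mul_left_cancel (a := g)
            calc g * (v * (g⁻¹ * α g)) = (g * v * g⁻¹) * α g := by group
              _ = (α g * v * (α g)⁻¹) * α g := by rw [heq]
              _ = α g * v := by group
              _ = g * (g⁻¹ * α g * v) := by group
          rw [hGA] at hle
          exact fun g => hle trivial
        -- Schur-Zassenhaus complement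
        have hVco : (Nat.card V).Coprime V.index := by
          rw [hm]
          exact Nat.Coprime.pow_left m (hq.coprime_iff_not_dvd.mpr hVidx)
        obtain ⟨H, hH⟩ := Subgroup.exists_right_complement'_of_coprime hVco
        have hHcard : Nat.card V * Nat.card H = Nat.card G := hH.card_mul
        have hHidx : Nat.card H = V.index := by
          have h1 := Subgroup.card_mul_index V
          have hpos : 0 < Nat.card V := Nat.card_pos
          exact Nat.eq_of_mul_eq_mul_left hpos (hHcard.trans h1.symm)
        have hpH : ¬ q ∣ Nat.card H := by rw [hHidx]; exact hVidx
        have hmem : ∀ g : G, ¬ q ∣ orderOf g → g ∈ H := by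
          intro g hg
          obtain ⟨⟨⟨v, hv⟩, ⟨h, hh⟩⟩, hvh, -⟩ := hH.existsUnique g
          simp only at hvh
          have hcomm : Commute v h :=
            Subgroup.mem_centralizer_iff.mp (hcent h) v hv
          have hvk : v ^ orderOf g * h ^ orderOf g = 1 := by
            rw [← hcomm.mul_pow, hvh, pow_orderOf_eq_one]
          have hvV : v ^ orderOf g ∈ V := pow_mem hv _
          have hvH : v ^ orderOf g ∈ H := by
            have h5 : v ^ orderOf g = (h ^ orderOf g)⁻¹ := eq_inv_of_mul_eq_one_left hvk
            rw [h5]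
            exact inv_mem (pow_mem hh _)
          have hv1 : v ^ orderOf g = 1 := Subgroup.disjoint_def.mp hH.disjoint hvV hvH
          have hordv : orderOf v ∣ q ^ m := by
            rw [← hm]
            have := orderOf_dvd_natCard (⟨v, hv⟩ : V)
            rwa [← Subgroup.orderOf_coe (⟨v, hv⟩ : V)] at this
          obtain ⟨i, hi, hvpi⟩ := (Nat.dvd_prime_pow hq).mp hordv
          have hi0 : i = 0 := by
            by_contra h0
            apply hg
            have h6 : q ∣ orderOf v := hvpi ▸ dvd_pow_self q h0
            exact h6.trans (orderOf_dvd_of_pow_eq_one hv1)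
          have hv1' : v = 1 := by
            apply orderOf_eq_one_iff.mp
            rw [hvpi, hi0, pow_zero]
          rw [← hvh, hv1', one_mul]
          exact hh
        have hαH : ∀ h ∈ H, α h ∈ H := by
          intro h hh
          apply hmem
          rw [show α h = α.toMonoidHom h from rfl,
            orderOf_injective α.toMonoidHom α.injective h]
          intro hdvd
          apply hpH
          have := orderOf_dvd_natCard (⟨h, hh⟩ : H)
          rw [← Subgroup.orderOf_coe (⟨h, hh⟩ : H)] at this
          exact hdvd.trans this
        have hle : autCommutator α ≤ H := by
          apply autCommutator_le
          intro g
          obtain ⟨⟨⟨v, hv⟩, ⟨h, hh⟩⟩, hvh, -⟩ := hH.existsUnique g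
          simp only at hvh
          have hαv : α v = v := hex v hv
          rw [← hvh, mul_inv_rev, map_mul, hαv]
          have hre : h⁻¹ * v⁻¹ * (v * α h) = h⁻¹ * α h := by group
          rw [hre]
          exact mul_mem (inv_mem hh) (hαH h hh)
        rw [hGA] at hle
        have hHtop : H = ⊤ := top_le_iff.mp hle
        have hVone : Nat.card V = 1 := by
          have h1 : Nat.card H = Nat.card G := by
            rw [hHtop]
            exact Subgroup.card_top
          have hpos : 0 < Nat.card G := Nat.card_pos
          have h2 : Nat.card V * Nat.card G = Nat.card G := by
            conv_lhs => rw [← h1]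
            exact hHcard
          exact Nat.eq_of_mul_eq_mul_right hpos (h2.trans (one_mul (Nat.card G)).symm)
        exact hcardV1 hVone

/-- Let `G` be a finite soluble group with a coprime automorphism `α`
such that `G = [G,α]`. Then a prime `p` divides `|G|` iff there is an `α`-invariant
Sylow `p`-subgroup `P` of `G` with `I_P(α) ≠ 1`, i.e. `P ⊄ C_G(α)`. -/
theorem stmt_7 {G : Type*} [Group G] [Finite G] [Group.IsSolvable G] (α : MulAut G)
    (hcop : Nat.Coprime (orderOf α) (Nat.card G))
    (hGA : autCommutator α = ⊤) (p : ℕ) (hp : p.Prime) :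
    p ∣ Nat.card G ↔
      ∃ P : Sylow p G, (P : Subgroup G).map α.toMonoidHom = P ∧
        ∃ x ∈ (P : Subgroup G), α x ≠ x := by
  constructor
  · intro hdvd
    exact main_ind (Nat.card G) G α le_rfl hcop hGA p hp hdvd
  · rintro ⟨P, _, x, hxP, hx⟩
    haveI : Fact p.Prime := ⟨hp⟩
    have hx1 : x ≠ 1 := by
      intro h
      apply hx
      rw [h, map_one]
    obtain ⟨k, hk⟩ := (IsPGroup.iff_card (p := p)).mp P.isPGroup'
    have hk0 : k ≠ 0 := by
      intro h0
      rw [h0, pow_zero] at hk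
      have : (P : Subgroup G) = ⊥ := Subgroup.card_eq_one.mp hk
      rw [this, Subgroup.mem_bot] at hxP
      exact hx1 hxP
    have h1 : p ∣ Nat.card (P : Subgroup G) := hk ▸ dvd_pow_self p hk0
    exact h1.trans (Subgroup.card_subgroup_dvd_card _)
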